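/- Let $G$ be an abelian group, $X, B_1, \ldots, B_k$ finite nonempty subsets of $G$ (written multiplicatively). Then there exists a subset $X' \subseteq X$ with $|X'| > \tfrac{1}{2}|X|$ such that $|X' B_1 \cdots B_k| \ll |X B_1| \cdots |X B_k| / |X|^{k-1}$, with implied constant depending only on $k$. -/

import Mathlib

open Finset Pointwise

lemma petridis_aux {α : Type*} [CommGroup α] [DecidableEq α]
    {A : Finset α} (hA : A.Nonempty) (D : Finset α) (n : ℕ) :
    ∃ Z, Z ⊆ A ∧ Z.Nonempty ∧
      ((Z * D ^ n).card : ℚ≥0) ≤ (((A * D).card : ℚ≥0) / (A.card : ℚ≥0)) ^ n * (Z.card : ℚ≥0) := by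
  classical
  have hA' : A ∈ A.powerset.erase ∅ := mem_erase_of_ne_of_mem hA.ne_empty (mem_powerset_self _)
  obtain ⟨U, hU, hUmin⟩ := exists_min_image (A.powerset.erase ∅)
    (fun U => ((U * D).card : ℚ≥0) / (U.card : ℚ≥0)) ⟨A, hA'⟩
  rw [mem_erase, mem_powerset, ← nonempty_iff_ne_empty] at hU
  obtain ⟨hUne, hUA⟩ := hU
  refine ⟨U, hUA, hUne, ?_⟩
  have hU₀ : (0 : ℚ≥0) < U.card := by exact_mod_cast hUne.card_pos
  have hmul : ∀ A' ⊆ U, (U * D).card * A'.card ≤ (A' * D).card * U.card := by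
    rintro A' hA'U
    obtain rfl | hA'ne := A'.eq_empty_or_nonempty
    · simp
    have h₀' : (0 : ℚ≥0) < A'.card := by exact_mod_cast hA'ne.card_pos
    have := hUmin A' (mem_erase_of_ne_of_mem hA'ne.ne_empty (mem_powerset.2 (hA'U.trans hUA)))
    exact_mod_cast (div_le_div_iff₀ hU₀ h₀').1 this
  have key : ∀ m : ℕ, ((U * D ^ m).card : ℚ≥0) ≤ (((U * D).card : ℚ≥0) / U.card) ^ m * U.card := by
    intro m
    induction m with
    | zero => simp
    | succ m ih =>
        refine le_of_mul_le_mul_right ?_ hU₀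
        calc ((U * D ^ (m + 1)).card : ℚ≥0) * U.card
            = ((U * D * D ^ m).card : ℚ≥0) * U.card := by rw [_root_.pow_succ', ← mul_assoc]
          _ ≤ ((U * D).card : ℚ≥0) * ((U * D ^ m).card : ℚ≥0) := by
              have h := Finset.pluennecke_petridis_inequality_mul (D ^ m) hmul
              rw [show D ^ m * U * D = U * D * D ^ m by rw [mul_comm (D ^ m) U, mul_right_comm],
                mul_comm (D ^ m) U] at h
              exact_mod_cast h
          _ ≤ ((U * D).card : ℚ≥0) * ((((U * D).card : ℚ≥0) / U.card) ^ m * U.card) := by gcongr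
          _ = (((U * D).card : ℚ≥0) / U.card) ^ (m + 1) * U.card * U.card := by
              rw [pow_succ, mul_assoc _ (((U * D).card : ℚ≥0) / U.card), div_mul_cancel₀ _ hU₀.ne']
              ring
  exact (key n).trans (mul_le_mul_left (pow_le_pow_left' (hUmin A hA') n) _)

lemma prodFS_mul {α β : Type*} [DecidableEq α] [DecidableEq β] [CommMonoid α] [CommMonoid β]
    (s₁ s₂ : Finset α) (t₁ t₂ : Finset β) :
    (s₁ ×ˢ t₁) * (s₂ ×ˢ t₂) = (s₁ * s₂) ×ˢ (t₁ * t₂) := by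
  ext ⟨a, b⟩
  simp only [Finset.mem_mul, Finset.mem_product, Prod.exists, Prod.mk_mul_mk, Prod.mk.injEq]
  constructor
  · rintro ⟨x₁, y₁, ⟨hx₁, hy₁⟩, x₂, y₂, ⟨hx₂, hy₂⟩, ha, hb⟩
    exact ⟨⟨x₁, hx₁, x₂, hx₂, ha⟩, ⟨y₁, hy₁, y₂, hy₂, hb⟩⟩
  · rintro ⟨⟨x₁, hx₁, x₂, hx₂, ha⟩, y₁, hy₁, y₂, hy₂, hb⟩
    exact ⟨x₁, y₁, ⟨hx₁, hy₁⟩, x₂, y₂, ⟨hx₂, hy₂⟩, ha, hb⟩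

lemma prodFS_prod {ι α β : Type*} [DecidableEq α] [DecidableEq β] [CommMonoid α] [CommMonoid β]
    (s : Finset ι) (f : ι → Finset α) (g : ι → Finset β) :
    ∏ i ∈ s, (f i ×ˢ g i) = (∏ i ∈ s, f i) ×ˢ (∏ i ∈ s, g i) := by
  classical
  induction s using Finset.cons_induction with
  | empty =>
      simp only [Finset.prod_empty]
      ext ⟨a, b⟩
      simp [Finset.mem_one, Finset.mem_product, Prod.ext_iff]
  | cons a s ha ih =>
      rw [Finset.prod_cons, Finset.prod_cons, Finset.prod_cons, ih, prodFS_mul]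

lemma prod_subset_prod_pw {ι α : Type*} [DecidableEq α] [CommMonoid α]
    (s : Finset ι) (f g : ι → Finset α) (h : ∀ i ∈ s, f i ⊆ g i) :
    ∏ i ∈ s, f i ⊆ ∏ i ∈ s, g i := by
  classical
  induction s using Finset.cons_induction with
  | empty => simp
  | cons a s ha ih =>
      rw [Finset.prod_cons, Finset.prod_cons]
      exact Finset.mul_subset_mul (h a (Finset.mem_cons_self a s))
        (ih fun i hi => h i (Finset.mem_cons_of_mem hi))

lemma prod_mem_prod_pw {ι α : Type*} [DecidableEq α] [CommMonoid α]
    (s : Finset ι) (u : ι → α) (f : ι → Finset α) (h : ∀ i ∈ s, u i ∈ f i) :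
    (∏ i ∈ s, u i) ∈ ∏ i ∈ s, f i := by
  classical
  induction s using Finset.cons_induction with
  | empty => simp
  | cons a s ha ih =>
      rw [Finset.prod_cons, Finset.prod_cons]
      exact Finset.mul_mem_mul (h a (Finset.mem_cons_self a s))
        (ih fun i hi => h i (Finset.mem_cons_of_mem hi))

lemma key_piece {G : Type*} [CommGroup G] [DecidableEq G] {k : ℕ}
    (W : Finset G) (hW : W.Nonempty) (B : Fin k → Finset G) (f : Fin k → ℕ) :
    ∃ Z, Z ⊆ W ∧ Z.Nonempty ∧
      ((Z * ∏ i, B i).card : ℚ≥0) * ∏ i, (f i : ℚ≥0) ≤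
        ((∑ i, (f i : ℚ≥0) * ((W * B i).card : ℚ≥0)) / (W.card : ℚ≥0)) ^ k
          * (Z.card : ℚ≥0) := by
  classical
  let H := Fin k → Multiplicative ℤ
  let e : Fin k → ℕ → H := fun i j => Pi.mulSingle i (Multiplicative.ofAdd ((j : ℤ) + 1))
  have he : ∀ i, Function.Injective (e i) := by
    intro i a b hab
    have h1 := congrFun hab i
    simp only [e, Pi.mulSingle_eq_same] at h1
    have h2 : a + 1 = b + 1 := by exact_mod_cast Multiplicative.ofAdd.injective h1
    omega
  let T : Fin k → Finset H := fun i => (Finset.range (f i)).image (e i)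
  have hTcard : ∀ i, (T i).card = f i := fun i => by
    rw [Finset.card_image_of_injective _ (he i), Finset.card_range]
  let D : Fin k → Finset (G × H) := fun i => B i ×ˢ T i
  let DD : Finset (G × H) := Finset.univ.biUnion D
  let Wh : Finset (G × H) := W ×ˢ (1 : Finset H)
  have hWh : Wh.Nonempty := hW.product ⟨1, Finset.one_mem_one⟩
  have hWhcard : (Wh.card : ℚ≥0) = (W.card : ℚ≥0) := by
    simp [Wh, Finset.card_product]
  obtain ⟨Zh, hZhsub, hZhne, hZh⟩ := petridis_aux hWh DD k
  let Z : Finset G := Zh.image Prod.fst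
  have hZsub : Z ⊆ W := by
    intro a ha
    obtain ⟨⟨x, y⟩, hxy, rfl⟩ := Finset.mem_image.mp ha
    have := hZhsub hxy
    rw [Finset.mem_product] at this
    exact this.1
  have hZne : Z.Nonempty := hZhne.image _
  have hZeq : Zh = Z ×ˢ (1 : Finset H) := by
    ext ⟨a, b⟩
    simp only [Z, Finset.mem_product, Finset.mem_image, Finset.mem_one, Prod.exists]
    constructor
    · intro h
      have hb : b = 1 := by
        have := hZhsub h
        rw [Finset.mem_product, Finset.mem_one] at this
        exact this.2
      exact ⟨⟨a, b, h, rfl⟩, hb⟩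
    · rintro ⟨⟨x, y, hxy, hx⟩, rfl⟩
      have hy : y = 1 := by
        have := hZhsub hxy
        rw [Finset.mem_product, Finset.mem_one] at this
        exact this.2
      rwa [← hx, ← hy]
  have hZhcard : (Zh.card : ℚ≥0) = (Z.card : ℚ≥0) := by
    rw [hZeq]; simp [Finset.card_product]
  -- (1) ∏ D ⊆ DD ^ k
  have h1 : Zh * ∏ i, D i ⊆ Zh * DD ^ k := by
    apply Finset.mul_subset_mul_left
    have h := prod_subset_prod_pw Finset.univ D (fun _ => DD)
      (fun i _ => Finset.subset_biUnion_of_mem D (Finset.mem_univ i))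
    simpa [Finset.prod_const, Finset.card_univ] using h
  -- (2) structure of Zh * ∏ D
  have h2 : Zh * ∏ i, D i = (Z * ∏ i, B i) ×ˢ (∏ i, T i) := by
    rw [hZeq, prodFS_prod, prodFS_mul, one_mul]
  -- (3) card lower bound on ∏ T
  have h3 : (∏ i, (f i : ℚ≥0)) ≤ ((∏ i, T i).card : ℚ≥0) := by
    have hinj : ((Fintype.piFinset fun i => Finset.range (f i)).card : ℚ≥0)
        ≤ ((∏ i, T i).card : ℚ≥0) := by
      have := Finset.card_le_card_of_injOn (fun a => ∏ i, e i (a i))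
        (fun a ha => prod_mem_prod_pw Finset.univ (fun i => e i (a i)) T
          (fun i _ => Finset.mem_image_of_mem _ (Fintype.mem_piFinset.mp ha i)))
        (fun a _ b _ hab => by
          have ha' : (∏ i, e i (a i)) = fun l => Multiplicative.ofAdd ((a l : ℤ) + 1) :=
            Finset.univ_prod_mulSingle _
          have hb' : (∏ i, e i (b i)) = fun l => Multiplicative.ofAdd ((b l : ℤ) + 1) :=
            Finset.univ_prod_mulSingle _
          have h0 : (fun l => Multiplicative.ofAdd ((a l : ℤ) + 1))
              = fun l => Multiplicative.ofAdd ((b l : ℤ) + 1) := by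
            rw [← ha', ← hb']; exact hab
          funext l
          have h2 : a l + 1 = b l + 1 := by
            exact_mod_cast Multiplicative.ofAdd.injective (congrFun h0 l)
          omega)
      exact_mod_cast this
    calc (∏ i, (f i : ℚ≥0)) = ((Fintype.piFinset fun i => Finset.range (f i)).card : ℚ≥0) := by
          rw [Fintype.card_piFinset]; push_cast; simp
      _ ≤ _ := hinj
  -- (4) upper bound on Wh * DD
  have h4 : ((Wh * DD).card : ℚ≥0) ≤ ∑ i, (f i : ℚ≥0) * ((W * B i).card : ℚ≥0) := by
    have hsub : Wh * DD ⊆ Finset.univ.biUnion fun i => Wh * D i := by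
      intro x hx
      rw [Finset.mem_mul] at hx
      obtain ⟨y, hy, z, hz, rfl⟩ := hx
      rw [Finset.mem_biUnion] at hz
      obtain ⟨i, _, hzi⟩ := hz
      exact Finset.mem_biUnion.mpr ⟨i, Finset.mem_univ i, Finset.mul_mem_mul hy hzi⟩
    have hcard : ∀ i, (Wh * D i).card = (W * B i).card * f i := by
      intro i
      rw [show Wh * D i = (W * B i) ×ˢ ((1 : Finset H) * T i) from prodFS_mul _ _ _ _,
        one_mul, Finset.card_product, hTcard]
    calc ((Wh * DD).card : ℚ≥0) ≤ ((Finset.univ.biUnion fun i => Wh * D i).card : ℚ≥0) := by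
          exact_mod_cast Finset.card_le_card hsub
      _ ≤ ∑ i, ((Wh * D i).card : ℚ≥0) := by exact_mod_cast Finset.card_biUnion_le
      _ = ∑ i, (f i : ℚ≥0) * ((W * B i).card : ℚ≥0) := by
          refine Finset.sum_congr rfl fun i _ => ?_
          rw [hcard i]; push_cast; ring
  refine ⟨Z, hZsub, hZne, ?_⟩
  calc ((Z * ∏ i, B i).card : ℚ≥0) * ∏ i, (f i : ℚ≥0)
      ≤ ((Z * ∏ i, B i).card : ℚ≥0) * ((∏ i, T i).card : ℚ≥0) := by
        exact mul_le_mul_right h3 _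
    _ = ((Zh * ∏ i, D i).card : ℚ≥0) := by rw [h2, Finset.card_product]; push_cast; ring
    _ ≤ ((Zh * DD ^ k).card : ℚ≥0) := by exact_mod_cast Finset.card_le_card h1
    _ ≤ (((Wh * DD).card : ℚ≥0) / (Wh.card : ℚ≥0)) ^ k * (Zh.card : ℚ≥0) := hZh
    _ ≤ ((∑ i, (f i : ℚ≥0) * ((W * B i).card : ℚ≥0)) / (W.card : ℚ≥0)) ^ k
          * (Z.card : ℚ≥0) := by
        have hnum : ((Wh * DD).card : ℚ≥0) / (W.card : ℚ≥0)
            ≤ (∑ i, (f i : ℚ≥0) * ((W * B i).card : ℚ≥0)) / (W.card : ℚ≥0) := by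
          rw [div_eq_mul_inv, div_eq_mul_inv]
          exact mul_le_mul_left h4 _
        rw [hZhcard, hWhcard]
        exact mul_le_mul_left (pow_le_pow_left' hnum k) _

lemma piece {G : Type*} [CommGroup G] [DecidableEq G] {k : ℕ}
    (X : Finset G) (hX : X.Nonempty) (B : Fin k → Finset G) (hB : ∀ i, (B i).Nonempty)
    (W : Finset G) (hWX : W ⊆ X) (hW : W.Nonempty) (h2 : X.card ≤ 2 * W.card) :
    ∃ Z, Z ⊆ W ∧ Z.Nonempty ∧
      ((Z * ∏ i, B i).card : ℚ≥0) * (X.card : ℚ≥0) ^ k ≤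
        ((2 * k : ℕ) : ℚ≥0) ^ k * (∏ i, ((X * B i).card : ℚ≥0)) * (Z.card : ℚ≥0) := by
  classical
  have hQpos : (0 : ℚ≥0) < ∏ i, ((X * B i).card : ℚ≥0) :=
    Finset.prod_pos fun i _ => by exact_mod_cast (hX.mul (hB i)).card_pos
  have hXpos : (0 : ℚ≥0) < X.card := by exact_mod_cast hX.card_pos
  have hWpos : (0 : ℚ≥0) < W.card := by exact_mod_cast hW.card_pos
  set f : Fin k → ℕ := fun i => ∏ j ∈ Finset.univ.erase i, (X * B j).card with hfdef
  have hfc : ∀ i, (f i : ℚ≥0) * ((X * B i).card : ℚ≥0) = ∏ j, ((X * B j).card : ℚ≥0) := by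
    intro i
    rw [← Finset.prod_erase_mul Finset.univ (fun j => ((X * B j).card : ℚ≥0))
      (Finset.mem_univ i), hfdef]
    push_cast
    ring
  obtain ⟨Z, hZW, hZne, hkey⟩ := key_piece W hW B f
  refine ⟨Z, hZW, hZne, ?_⟩
  set P : ℚ≥0 := ∏ j, ((X * B j).card : ℚ≥0) with hPdef
  set F : ℚ≥0 := ∏ i, (f i : ℚ≥0) with hFdef
  set S : ℚ≥0 := ∑ i, (f i : ℚ≥0) * ((W * B i).card : ℚ≥0) with hSdef
  have hS : S ≤ (k : ℚ≥0) * P := by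
    rw [hSdef]
    calc ∑ i, (f i : ℚ≥0) * ((W * B i).card : ℚ≥0)
        ≤ ∑ i, (f i : ℚ≥0) * ((X * B i).card : ℚ≥0) := by
          refine Finset.sum_le_sum fun i _ => mul_le_mul_right ?_ _
          exact_mod_cast Finset.card_le_card (Finset.mul_subset_mul_right hWX)
      _ = ∑ _i : Fin k, P := Finset.sum_congr rfl fun i _ => hfc i
      _ = (k : ℚ≥0) * P := by
          rw [Finset.sum_const, Finset.card_univ, Fintype.card_fin, nsmul_eq_mul]
  have hF : F * P = P ^ k := by
    rw [hFdef, ← Finset.prod_mul_distrib]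
    calc ∏ i, ((f i : ℚ≥0) * ((X * B i).card : ℚ≥0)) = ∏ _i : Fin k, P :=
          Finset.prod_congr rfl fun i _ => hfc i
      _ = P ^ k := by rw [Finset.prod_const, Finset.card_univ, Fintype.card_fin]
  have hXW : (X.card : ℚ≥0) ^ k ≤ 2 ^ k * (W.card : ℚ≥0) ^ k := by
    rw [← mul_pow]
    refine pow_le_pow_left' ?_ k
    have : (X.card : ℚ≥0) ≤ ((2 * W.card : ℕ) : ℚ≥0) := by exact_mod_cast h2
    push_cast at this
    exact this
  have h5 : ((Z * ∏ i, B i).card : ℚ≥0) * F * (W.card : ℚ≥0) ^ k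
      ≤ S ^ k * (Z.card : ℚ≥0) := by
    rw [div_pow, div_mul_eq_mul_div] at hkey
    exact (le_div_iff₀ (pow_pos hWpos k)).mp hkey
  refine le_of_mul_le_mul_right ?_ (pow_pos hQpos k)
  calc ((Z * ∏ i, B i).card : ℚ≥0) * (X.card : ℚ≥0) ^ k * (∏ i, ((X * B i).card : ℚ≥0)) ^ k
      = (((Z * ∏ i, B i).card : ℚ≥0) * F) * ((X.card : ℚ≥0) ^ k) * P := by
        rw [← hF]; ring
    _ ≤ (((Z * ∏ i, B i).card : ℚ≥0) * F) * (2 ^ k * (W.card : ℚ≥0) ^ k) * P :=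
        mul_le_mul_left (mul_le_mul_right hXW _) _
    _ = 2 ^ k * P * (((Z * ∏ i, B i).card : ℚ≥0) * F * (W.card : ℚ≥0) ^ k) := by ring
    _ ≤ 2 ^ k * P * (S ^ k * (Z.card : ℚ≥0)) := mul_le_mul_right h5 _
    _ ≤ 2 ^ k * P * (((k : ℚ≥0) * P) ^ k * (Z.card : ℚ≥0)) :=
        mul_le_mul_right (mul_le_mul_left (pow_le_pow_left' hS k) _) _
    _ = ((2 * k : ℕ) : ℚ≥0) ^ k * (∏ i, ((X * B i).card : ℚ≥0)) * (Z.card : ℚ≥0)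
          * (∏ i, ((X * B i).card : ℚ≥0)) ^ k := by
        push_cast
        ring

lemma greedy {G : Type*} [CommGroup G] [DecidableEq G] {k : ℕ}
    (X : Finset G) (hX : X.Nonempty) (B : Fin k → Finset G) (hB : ∀ i, (B i).Nonempty) :
    ∀ n (X' : Finset G), X' ⊆ X → X.card ≤ n + X'.card →
      ((X' * ∏ i, B i).card : ℚ≥0) * (X.card : ℚ≥0) ^ k ≤
        ((2 * k : ℕ) : ℚ≥0) ^ k * (∏ i, ((X * B i).card : ℚ≥0)) * (X'.card : ℚ≥0) →
      ∃ X'', X'' ⊆ X ∧ X.card < 2 * X''.card ∧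
        ((X'' * ∏ i, B i).card : ℚ≥0) * (X.card : ℚ≥0) ^ k ≤
          ((2 * k : ℕ) : ℚ≥0) ^ k * (∏ i, ((X * B i).card : ℚ≥0)) * (X''.card : ℚ≥0) := by
  intro n
  induction n with
  | zero =>
      intro X' hsub hcard hbound
      refine ⟨X', hsub, ?_, hbound⟩
      have h1 : X'.card ≤ X.card := Finset.card_le_card hsub
      have h2 := hX.card_pos
      omega
  | succ n ih =>
      intro X' hsub hcard hbound
      by_cases hhalf : X.card < 2 * X'.card
      · exact ⟨X', hsub, hhalf, hbound⟩
      · push_neg at hhalf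
        have hXpos := hX.card_pos
        have hXlt : X'.card < X.card := by omega
        have hWne : (X \ X').Nonempty := by
          rw [← Finset.card_pos, Finset.card_sdiff_of_subset hsub]; omega
        have hW2 : X.card ≤ 2 * (X \ X').card := by
          rw [Finset.card_sdiff_of_subset hsub]; omega
        obtain ⟨Z, hZW, hZne, hZ⟩ := piece X hX B hB (X \ X') Finset.sdiff_subset hWne hW2
        have hdisj : Disjoint X' Z := Finset.disjoint_sdiff.mono_right hZW
        have hcardU : (X' ∪ Z).card = X'.card + Z.card := Finset.card_union_of_disjoint hdisj
        have hsubU : X' ∪ Z ⊆ X := Finset.union_subset hsub (hZW.trans Finset.sdiff_subset)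
        have hZpos := hZne.card_pos
        refine ih (X' ∪ Z) hsubU (by omega) ?_
        calc (((X' ∪ Z) * ∏ i, B i).card : ℚ≥0) * (X.card : ℚ≥0) ^ k
            ≤ (((X' * ∏ i, B i).card : ℚ≥0) + ((Z * ∏ i, B i).card : ℚ≥0))
                * (X.card : ℚ≥0) ^ k := by
              refine mul_le_mul_left ?_ _
              have : ((X' ∪ Z) * ∏ i, B i).card ≤
                  (X' * ∏ i, B i).card + (Z * ∏ i, B i).card := by
                rw [Finset.union_mul]
                exact Finset.card_union_le _ _
              exact_mod_cast this
          _ = ((X' * ∏ i, B i).card : ℚ≥0) * (X.card : ℚ≥0) ^ k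
                + ((Z * ∏ i, B i).card : ℚ≥0) * (X.card : ℚ≥0) ^ k := by ring
          _ ≤ ((2 * k : ℕ) : ℚ≥0) ^ k * (∏ i, ((X * B i).card : ℚ≥0)) * (X'.card : ℚ≥0)
                + ((2 * k : ℕ) : ℚ≥0) ^ k * (∏ i, ((X * B i).card : ℚ≥0)) * (Z.card : ℚ≥0) :=
              add_le_add hbound hZ
          _ = ((2 * k : ℕ) : ℚ≥0) ^ k * (∏ i, ((X * B i).card : ℚ≥0))
                * (((X' ∪ Z).card : ℚ≥0)) := by
              rw [hcardU]; push_cast; ring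

theorem stmt_18 (k : ℕ) (hk : 1 ≤ k) :
    ∃ C : ℝ, 0 < C ∧ ∀ (G : Type) [CommGroup G] [DecidableEq G]
      (X : Finset G) (B : Fin k → Finset G),
      X.Nonempty → (∀ i, (B i).Nonempty) →
      ∃ X' ⊆ X, X.card < 2 * X'.card ∧
        ((X' * ∏ i, B i).card : ℝ) * (X.card : ℝ) ^ (k - 1)
          ≤ C * ∏ i, ((X * B i).card : ℝ) := by
  refine ⟨(2 * (k : ℝ)) ^ k, by positivity, ?_⟩
  intro G _ _ X B hX hB
  obtain ⟨X'', hsub, hhalf, hbound⟩ := greedy X hX B hB X.card ∅ (Finset.empty_subset X)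
    (by simp) (by simp)
  refine ⟨X'', hsub, hhalf, ?_⟩
  have hXpos : (0 : ℚ≥0) < X.card := by exact_mod_cast hX.card_pos
  have h1 : ((X'' * ∏ i, B i).card : ℚ≥0) * (X.card : ℚ≥0) ^ (k - 1) ≤
      ((2 * k : ℕ) : ℚ≥0) ^ k * (∏ i, ((X * B i).card : ℚ≥0)) := by
    refine le_of_mul_le_mul_right ?_ hXpos
    have hk1 : k - 1 + 1 = k := by omega
    calc ((X'' * ∏ i, B i).card : ℚ≥0) * (X.card : ℚ≥0) ^ (k - 1) * (X.card : ℚ≥0)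
        = ((X'' * ∏ i, B i).card : ℚ≥0) * (X.card : ℚ≥0) ^ k := by
          rw [mul_assoc, ← pow_succ, hk1]
      _ ≤ ((2 * k : ℕ) : ℚ≥0) ^ k * (∏ i, ((X * B i).card : ℚ≥0)) * (X''.card : ℚ≥0) :=
          hbound
      _ ≤ ((2 * k : ℕ) : ℚ≥0) ^ k * (∏ i, ((X * B i).card : ℚ≥0)) * (X.card : ℚ≥0) :=
          mul_le_mul_right (by exact_mod_cast Finset.card_le_card hsub) _
  have hNat : (X'' * ∏ i, B i).card * X.card ^ (k - 1) ≤
      (2 * k) ^ k * ∏ i, (X * B i).card := by exact_mod_cast h1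
  exact_mod_cast hNat
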